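/- For every natural number r ≥ 0 one has the inclusions of ideals γ·J_r ⊆ J_{r+1} ⊆ J_r in ℂ[α,β,γ]. -/
import Mathlib


open MvPolynomial

/-- The triple (R¹_r, R²_r, R³_r) of polynomials in ℂ[α,β,γ] (α = X 0, β = X 1, γ = X 2). -/
noncomputable def Rr : ℕ → MvPolynomial (Fin 3) ℂ × MvPolynomial (Fin 3) ℂ × MvPolynomial (Fin 3) ℂ
  | 0 => (1, 0, 0)
  | (r + 1) =>
      (X 0 * (Rr r).1 + C ((r : ℂ) ^ 2) * (Rr r).2.1,
       (X 1 + C ((-1 : ℂ) ^ (r + 1) * 8)) * (Rr r).1 + C ((2 * r : ℂ) / (r + 1)) * (Rr r).2.2,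
       X 2 * (Rr r).1)

/-- The ideal J_r = (R¹_r, R²_r, R³_r) ⊆ ℂ[α,β,γ]. -/
noncomputable def Jr (r : ℕ) : Ideal (MvPolynomial (Fin 3) ℂ) :=
  Ideal.span {(Rr r).1, (Rr r).2.1, (Rr r).2.2}

lemma R1_succ (r : ℕ) : (Rr (r + 1)).1 = X 0 * (Rr r).1 + C ((r : ℂ) ^ 2) * (Rr r).2.1 := rfl

lemma R2_succ (r : ℕ) : (Rr (r + 1)).2.1 =
    (X 1 + C ((-1 : ℂ) ^ (r + 1) * 8)) * (Rr r).1 + C ((2 * r : ℂ) / (r + 1)) * (Rr r).2.2 := rfl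

lemma R3_succ (r : ℕ) : (Rr (r + 1)).2.2 = X 2 * (Rr r).1 := rfl

lemma mem1 (r : ℕ) : (Rr r).1 ∈ Jr r := Ideal.subset_span (by simp)
lemma mem2 (r : ℕ) : (Rr r).2.1 ∈ Jr r := Ideal.subset_span (by simp)
lemma mem3 (r : ℕ) : (Rr r).2.2 ∈ Jr r := Ideal.subset_span (by simp)

lemma gen1 (r : ℕ) : X 2 * (Rr r).1 ∈ Jr (r + 1) := by
  rw [← R3_succ]; exact mem3 (r + 1)

lemma gen2 (r : ℕ) : X 2 * (Rr r).2.1 ∈ Jr (r + 1) := by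
  cases r with
  | zero => show X 2 * (0 : MvPolynomial (Fin 3) ℂ) ∈ _; rw [mul_zero]; exact zero_mem _
  | succ s =>
    have hc : (((s + 1 : ℕ) : ℂ)) ^ 2 ≠ 0 :=
      pow_ne_zero _ (Nat.cast_ne_zero.mpr (Nat.succ_ne_zero s))
    have h1 : C ((((s + 1 : ℕ) : ℂ)) ^ 2)⁻¹ * C ((((s + 1 : ℕ) : ℂ)) ^ 2)
        = (1 : MvPolynomial (Fin 3) ℂ) := by
      rw [← C_mul, inv_mul_cancel₀ hc, C_1]
    have key : X 2 * (Rr (s + 1)).2.1 =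
        C ((((s + 1 : ℕ) : ℂ)) ^ 2)⁻¹ * (X 2 * (Rr (s + 2)).1) -
        C ((((s + 1 : ℕ) : ℂ)) ^ 2)⁻¹ * (X 0 * (Rr (s + 2)).2.2) := by
      rw [R1_succ (s + 1), R3_succ (s + 1)]
      push_cast
      push_cast at h1
      linear_combination (-(X 2 * (Rr (s + 1)).2.1)) * h1
    rw [key]
    exact Ideal.sub_mem _
      (Ideal.mul_mem_left _ _ (Ideal.mul_mem_left _ _ (mem1 (s + 2))))
      (Ideal.mul_mem_left _ _ (Ideal.mul_mem_left _ _ (mem3 (s + 2))))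

lemma gen3 (r : ℕ) : X 2 * (Rr r).2.2 ∈ Jr (r + 1) := by
  cases r with
  | zero => show X 2 * (0 : MvPolynomial (Fin 3) ℂ) ∈ _; rw [mul_zero]; exact zero_mem _
  | succ s =>
    have hd : (2 * ((s : ℂ) + 1)) / (((s : ℂ) + 1) + 1) ≠ 0 := by
      apply div_ne_zero
      · have : ((s : ℂ) + 1) = ((s + 1 : ℕ) : ℂ) := by push_cast; ring
        rw [this]
        exact mul_ne_zero two_ne_zero (Nat.cast_ne_zero.mpr (Nat.succ_ne_zero s))
      · have : (((s : ℂ) + 1) + 1) = ((s + 2 : ℕ) : ℂ) := by push_cast; ring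
        rw [this]
        exact Nat.cast_ne_zero.mpr (by omega)
    have h1 : C ((2 * ((s : ℂ) + 1)) / (((s : ℂ) + 1) + 1))⁻¹ *
        C ((2 * ((s : ℂ) + 1)) / (((s : ℂ) + 1) + 1)) = (1 : MvPolynomial (Fin 3) ℂ) := by
      rw [← C_mul, inv_mul_cancel₀ hd, C_1]
    have key : X 2 * (Rr (s + 1)).2.2 =
        C ((2 * ((s : ℂ) + 1)) / (((s : ℂ) + 1) + 1))⁻¹ * (X 2 * (Rr (s + 2)).2.1) -
        C ((2 * ((s : ℂ) + 1)) / (((s : ℂ) + 1) + 1))⁻¹ *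
          ((X 1 + C ((-1 : ℂ) ^ (s + 2) * 8)) * (Rr (s + 2)).2.2) := by
      rw [R2_succ (s + 1), R3_succ (s + 1)]
      push_cast
      linear_combination (-(X 2 * (Rr (s + 1)).2.2)) * h1
    rw [key]
    exact Ideal.sub_mem _
      (Ideal.mul_mem_left _ _ (Ideal.mul_mem_left _ _ (mem2 (s + 2))))
      (Ideal.mul_mem_left _ _ (Ideal.mul_mem_left _ _ (mem3 (s + 2))))

/-- For every r ≥ 0 one has the inclusions of ideals γ·J_r ⊆ J_{r+1} ⊆ J_r in ℂ[α,β,γ]. -/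
theorem stmt9 (r : ℕ) :
    (∀ p ∈ Jr r, X 2 * p ∈ Jr (r + 1)) ∧ Jr (r + 1) ≤ Jr r := by
  constructor
  · intro p hp
    refine Submodule.span_induction (p := fun x _ => X 2 * x ∈ Jr (r + 1)) ?_ ?_ ?_ ?_ hp
    · intro x hx
      rcases hx with rfl | rfl | rfl
      · exact gen1 r
      · exact gen2 r
      · exact gen3 r
    · simp only [mul_zero]; exact zero_mem (Jr (r + 1))
    · intro x y _ _ hx hy
      rw [mul_add]; exact add_mem hx hy
    · intro a x _ hx
      rw [smul_eq_mul, mul_left_comm]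
      exact Ideal.mul_mem_left _ _ hx
  · rw [Jr, Ideal.span_le]
    rintro q (rfl | rfl | rfl)
    · rw [R1_succ]
      exact add_mem (Ideal.mul_mem_left _ _ (mem1 r)) (Ideal.mul_mem_left _ _ (mem2 r))
    · rw [R2_succ]
      exact add_mem (Ideal.mul_mem_left _ _ (mem1 r)) (Ideal.mul_mem_left _ _ (mem3 r))
    · rw [R3_succ]
      exact Ideal.mul_mem_left _ _ (mem1 r)
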